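/- Let d ≥ 1, let P⁻ be a nonempty finite family of m⁻ points and P⁺ a nonempty finite family of m⁺ points in ℝ^d. Let τ⁻ be a Tukey median of P⁻ (a point of ℝ^d of maximum Tukey depth with respect to P⁻) and τ⁺ a Tukey median of P⁺, and suppose τ⁻ ≠ τ⁺. Set w = τ⁺ − τ⁻ and project every point of P⁻ and P⁺ along w. Then every linear classifier on the projected families makes at least ⌈min(m⁻, m⁺)/(d+1)⌉ misclassifications; that is, for every nonzero v ∈ ℝ^d and every c ∈ ℝ, the number of indices i with ⟪π_w(P⁻ i), v⟫ ≥ c plus the number of indices j with ⟪π_w(P⁺ j), v⟫ < c is at least ⌈min(m⁻, m⁺)/(d+1)⌉. -/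

import Mathlib

open scoped InnerProductSpace
open scoped Classical

/-- Projection of a point `p` along the vector `w`. -/
noncomputable def proj {d : ℕ} (w p : EuclideanSpace ℝ (Fin d)) : EuclideanSpace ℝ (Fin d) :=
  p - (⟪p, w⟫_ℝ / ‖w‖ ^ 2) • w

/-- Tukey depth of `q` with respect to the finite family `P`. -/
noncomputable def tukeyDepth {d m : ℕ} (q : EuclideanSpace ℝ (Fin d))
    (P : Fin m → EuclideanSpace ℝ (Fin d)) : ℕ :=
  sInf {k : ℕ | ∃ v : EuclideanSpace ℝ (Fin d), v ≠ 0 ∧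
    k = (Finset.univ.filter fun i => 0 ≤ ⟪P i - q, v⟫_ℝ).card}

lemma proj_inner {d : ℕ} (w p v : EuclideanSpace ℝ (Fin d)) :
    ⟪proj w p, v⟫_ℝ = ⟪p, proj w v⟫_ℝ := by
  simp only [proj, inner_sub_left, inner_sub_right, real_inner_smul_left,
    real_inner_smul_right]
  rw [real_inner_comm v w]
  ring

/-- **Centerpoint theorem**. -/
lemma exists_centerpoint {d m : ℕ} (hm : 0 < m) (P : Fin m → EuclideanSpace ℝ (Fin d)) :
    ∃ q : EuclideanSpace ℝ (Fin d), ∀ v : EuclideanSpace ℝ (Fin d), v ≠ 0 →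
      (m + d) / (d + 1) ≤ (Finset.univ.filter fun i => 0 ≤ ⟪P i - q, v⟫_ℝ).card := by
  set t : ℕ := (m + d) / (d + 1) with ht
  have hdt : t * (d + 1) ≤ m + d := Nat.div_mul_le_self _ _
  have ht1 : 1 ≤ t := (Nat.le_div_iff_mul_le (by omega)).mpr (by omega)
  have htm : t ≤ m := by
    have h1 : m + d ≤ m * (d + 1) := by nlinarith
    calc t ≤ m * (d + 1) / (d + 1) := Nat.div_le_div_right h1
    _ = m := Nat.mul_div_cancel m (by omega)
  -- Helly setup
  set F : Finset (Fin m) → Set (EuclideanSpace ℝ (Fin d)) :=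
    fun S => convexHull ℝ (P '' ↑S) with hF
  set s : Finset (Finset (Fin m)) :=
    Finset.univ.filter (fun S => S.card = m - t + 1) with hs
  have hfin : Module.finrank ℝ (EuclideanSpace ℝ (Fin d)) = d := finrank_euclideanSpace_fin
  have hinter : (⋂ S ∈ s, F S).Nonempty := by
    apply Convex.helly_theorem' (fun S _ => convex_convexHull ℝ _)
    intro I hI hIcard
    rw [hfin] at hIcard
    -- find an index in all S ∈ I
    set B : Finset (Fin m) := I.biUnion (fun S => Sᶜ) with hB
    have hBcard : B.card < m := by
      have h1 : B.card ≤ ∑ S ∈ I, Sᶜ.card := Finset.card_biUnion_le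
      have h2 : ∀ S ∈ I, Sᶜ.card = t - 1 := by
        intro S hS
        have := hI hS
        rw [hs, Finset.mem_filter] at this
        rw [Finset.card_compl, this.2]
        simp only [Fintype.card_fin]
        omega
      rw [Finset.sum_congr rfl h2, Finset.sum_const, smul_eq_mul] at h1
      have h3 : I.card * (t - 1) ≤ (d + 1) * (t - 1) :=
        Nat.mul_le_mul_right _ hIcard
      have h4 : (d + 1) * (t - 1) + (d + 1) ≤ m + d := by
        rw [← Nat.mul_succ]
        have h5 : t - 1 + 1 = t := by omega
        rw [Nat.succ_eq_add_one, h5, mul_comm]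
        exact hdt
      linarith
    have hBc : Bᶜ.Nonempty := by
      rw [← Finset.card_pos, Finset.card_compl]
      simp only [Fintype.card_fin]
      omega
    obtain ⟨i, hi⟩ := hBc
    refine ⟨P i, Set.mem_iInter₂.mpr fun S hS => ?_⟩
    have hiS : i ∈ S := by
      by_contra h
      rw [Finset.mem_compl] at hi
      exact hi (Finset.mem_biUnion.mpr ⟨S, hS, Finset.mem_compl.mpr h⟩)
    exact subset_convexHull ℝ _ (Set.mem_image_of_mem P (Finset.mem_coe.mpr hiS))
  obtain ⟨q, hq⟩ := hinter
  refine ⟨q, fun v hv => ?_⟩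
  by_contra hlt
  push_neg at hlt
  set A : Finset (Fin m) := Finset.univ.filter (fun i => 0 ≤ ⟪P i - q, v⟫_ℝ) with hA
  have hAc : m - t + 1 ≤ Aᶜ.card := by
    rw [Finset.card_compl]
    simp only [Fintype.card_fin]
    omega
  obtain ⟨S, hSsub, hScard⟩ := Finset.exists_subset_card_eq hAc
  have hSs : S ∈ s := by
    rw [hs, Finset.mem_filter]
    exact ⟨Finset.mem_univ _, hScard⟩
  have hqS : q ∈ F S := Set.mem_iInter₂.mp hq S hSs
  have hconv : Convex ℝ {x : EuclideanSpace ℝ (Fin d) | ⟪x, v⟫_ℝ < ⟪q, v⟫_ℝ} :=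
    convex_halfSpace_lt ⟨fun x y => inner_add_left x y v,
      fun c x => real_inner_smul_left x v c⟩ _
  have hsub : P '' ↑S ⊆ {x : EuclideanSpace ℝ (Fin d) | ⟪x, v⟫_ℝ < ⟪q, v⟫_ℝ} := by
    rintro x ⟨i, hiS, rfl⟩
    have hiA : i ∉ A := Finset.mem_compl.mp (hSsub hiS)
    rw [hA, Finset.mem_filter] at hiA
    push_neg at hiA
    have := hiA (Finset.mem_univ _)
    rw [inner_sub_left] at this
    simpa using this
  have := convexHull_min hsub hconv hqS
  simp at this

/-- A Tukey median has depth at least the centerpoint bound, for every direction. -/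
lemma median_halfspace_bound {d m : ℕ} (hd : 1 ≤ d) (hm : 0 < m)
    (P : Fin m → EuclideanSpace ℝ (Fin d)) (τ : EuclideanSpace ℝ (Fin d))
    (hτ : ∀ q : EuclideanSpace ℝ (Fin d), tukeyDepth q P ≤ tukeyDepth τ P)
    (u : EuclideanSpace ℝ (Fin d)) :
    (m + d) / (d + 1) ≤ (Finset.univ.filter fun i => 0 ≤ ⟪P i - τ, u⟫_ℝ).card := by
  have htm : (m + d) / (d + 1) ≤ m := by
    have h1 : m + d ≤ m * (d + 1) := by nlinarith
    calc (m + d) / (d + 1) ≤ m * (d + 1) / (d + 1) := Nat.div_le_div_right h1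
    _ = m := Nat.mul_div_cancel m (by omega)
  by_cases hu : u = 0
  · subst hu
    simp only [inner_zero_right, le_refl, Finset.filter_true, Finset.filter_univ_mem]
    simpa using htm
  obtain ⟨q, hq⟩ := exists_centerpoint hm P
  have hqd : (m + d) / (d + 1) ≤ tukeyDepth q P := by
    apply le_csInf
    · exact ⟨_, ⟨u, hu, rfl⟩⟩
    · rintro k ⟨v, hv, rfl⟩
      exact hq v hv
  have hτd : tukeyDepth τ P ≤
      (Finset.univ.filter fun i => 0 ≤ ⟪P i - τ, u⟫_ℝ).card :=
    Nat.sInf_le ⟨u, hu, rfl⟩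
  exact le_trans (le_trans hqd (hτ q)) hτd

theorem tukey_median_projection_misclassifications {d m₁ m₂ : ℕ} (hd : 1 ≤ d)
    (hm₁ : 0 < m₁) (hm₂ : 0 < m₂)
    (Pm : Fin m₁ → EuclideanSpace ℝ (Fin d)) (Pp : Fin m₂ → EuclideanSpace ℝ (Fin d))
    (τm τp : EuclideanSpace ℝ (Fin d))
    (hτm : ∀ q : EuclideanSpace ℝ (Fin d), tukeyDepth q Pm ≤ tukeyDepth τm Pm)
    (hτp : ∀ q : EuclideanSpace ℝ (Fin d), tukeyDepth q Pp ≤ tukeyDepth τp Pp)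
    (hne : τm ≠ τp)
    (v : EuclideanSpace ℝ (Fin d)) (hv : v ≠ 0) (c : ℝ) :
    (min m₁ m₂ + d) / (d + 1) ≤
      (Finset.univ.filter fun i => c ≤ ⟪proj (τp - τm) (Pm i), v⟫_ℝ).card +
      (Finset.univ.filter fun j => ⟪proj (τp - τm) (Pp j), v⟫_ℝ < c).card := by
  set w : EuclideanSpace ℝ (Fin d) := τp - τm with hw
  have hwne : w ≠ 0 := sub_ne_zero_of_ne (Ne.symm hne)
  set u : EuclideanSpace ℝ (Fin d) := proj w v with hu
  -- the two medians project to the same point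
  have hwsq : (‖w‖ : ℝ) ^ 2 ≠ 0 := pow_ne_zero 2 (norm_ne_zero_iff.mpr hwne)
  have hproj_eq : proj w τp = proj w τm := by
    have h1 : ⟪τp, w⟫_ℝ / ‖w‖ ^ 2 = ⟪τm, w⟫_ℝ / ‖w‖ ^ 2 + 1 := by
      have h2 : ⟪τp, w⟫_ℝ = ⟪τm, w⟫_ℝ + ‖w‖ ^ 2 := by
        have : τp = τm + w := by rw [hw]; abel
        rw [this, inner_add_left, real_inner_self_eq_norm_sq]
      rw [h2, add_div, div_self hwsq]
    simp only [proj, h1, add_smul, one_smul]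
    have h3 : τp = τm + w := by rw [hw]; abel
    rw [h3]
    abel
  have hkey : ∀ p : EuclideanSpace ℝ (Fin d), ⟪proj w p, v⟫_ℝ = ⟪p, u⟫_ℝ :=
    fun p => proj_inner w p v
  by_cases hc : c ≤ ⟪proj w τm, v⟫_ℝ
  · -- bound using the negative points
    have hsub : (Finset.univ.filter fun i => 0 ≤ ⟪Pm i - τm, u⟫_ℝ) ⊆
        (Finset.univ.filter fun i => c ≤ ⟪proj w (Pm i), v⟫_ℝ) := by
      intro i hi
      rw [Finset.mem_filter] at hi ⊢
      refine ⟨Finset.mem_univ _, ?_⟩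
      have h1 : ⟪Pm i - τm, u⟫_ℝ = ⟪proj w (Pm i), v⟫_ℝ - ⟪proj w τm, v⟫_ℝ := by
        rw [inner_sub_left, hkey, hkey]
      have := hi.2
      rw [h1] at this
      linarith
    calc (min m₁ m₂ + d) / (d + 1) ≤ (m₁ + d) / (d + 1) :=
        Nat.div_le_div_right (by omega)
    _ ≤ (Finset.univ.filter fun i => 0 ≤ ⟪Pm i - τm, u⟫_ℝ).card :=
        median_halfspace_bound hd hm₁ Pm τm hτm u
    _ ≤ (Finset.univ.filter fun i => c ≤ ⟪proj w (Pm i), v⟫_ℝ).card :=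
        Finset.card_le_card hsub
    _ ≤ _ := Nat.le_add_right _ _
  · -- bound using the positive points
    push_neg at hc
    have hsub : (Finset.univ.filter fun j => 0 ≤ ⟪Pp j - τp, -u⟫_ℝ) ⊆
        (Finset.univ.filter fun j => ⟪proj w (Pp j), v⟫_ℝ < c) := by
      intro j hj
      rw [Finset.mem_filter] at hj ⊢
      refine ⟨Finset.mem_univ _, ?_⟩
      have h1 : ⟪Pp j - τp, u⟫_ℝ = ⟪proj w (Pp j), v⟫_ℝ - ⟪proj w τm, v⟫_ℝ := by
        rw [inner_sub_left, ← hproj_eq, hkey, hkey]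
      have h2 := hj.2
      rw [inner_neg_right] at h2
      have h3 : ⟪Pp j - τp, u⟫_ℝ ≤ 0 := by linarith
      rw [h1] at h3
      linarith
    calc (min m₁ m₂ + d) / (d + 1) ≤ (m₂ + d) / (d + 1) :=
        Nat.div_le_div_right (by omega)
    _ ≤ (Finset.univ.filter fun j => 0 ≤ ⟪Pp j - τp, -u⟫_ℝ).card :=
        median_halfspace_bound hd hm₂ Pp τp hτp (-u)
    _ ≤ (Finset.univ.filter fun j => ⟪proj w (Pp j), v⟫_ℝ < c).card :=
        Finset.card_le_card hsub
    _ ≤ _ := Nat.le_add_left _ _
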